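/- Let (K,v) be a henselian valued field with algebraic closure K̄ and unique extension of v to K̄ (still denoted v). For a monic irreducible polynomial F ∈ K[x] and a root θ ∈ K̄ of F, the function v_F(f) = v(f(θ)) for f ∈ K[x] is independent of the choice of the root θ, and defines a valuation on K[x] extending v with support the ideal generated by F. -/

import Mathlib

open Polynomial

section Preamble

variable {Λ : Type*} [AddCommGroup Λ] [LinearOrder Λ] [IsOrderedAddMonoid Λ]

/-- A (Krull) valuation on a commutative ring, written additively, with value `⊤` at `0`. -/
def IsVal {R : Type*} [CommRing R] (μ : R → WithTop Λ) : Prop :=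
  μ 0 = ⊤ ∧ μ 1 = 0 ∧ (∀ a b, μ (a * b) = μ a + μ b) ∧ ∀ a b, min (μ a) (μ b) ≤ μ (a + b)

variable {K : Type*} [Field K]

/-- `μ` is a valuation on `K[x]` whose restriction to `K` is `v`. -/
def ExtendsVal (v : K → WithTop Λ) (μ : Polynomial K → WithTop Λ) : Prop :=
  ∀ a : K, μ (Polynomial.C a) = v a

/-- `a ∼_μ b`: the initial terms of `a` and `b` in the graded algebra of `μ` coincide. -/
def MuEquiv (μ : Polynomial K → WithTop Λ) (a b : Polynomial K) : Prop :=
  (μ a = μ b ∧ μ a < μ (a - b)) ∨ (μ a = ⊤ ∧ μ b = ⊤)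

/-- `h ∣_μ g` : the initial term of `h` divides the initial term of `g` in the
graded algebra `G_μ`. -/
def MuDvd (μ : Polynomial K → WithTop Λ) (h g : Polynomial K) : Prop :=
  ∃ c, MuEquiv μ (h * c) g

/-- `g` is `μ`-minimal: `g ∤_μ f` for all nonzero `f` of degree smaller than `deg g`. -/
def MuMinimal (μ : Polynomial K → WithTop Λ) (g : Polynomial K) : Prop :=
  ∀ f : Polynomial K, f ≠ 0 → f.degree < g.degree → ¬ MuDvd μ g f

/-- `g` is `μ`-irreducible: the principal ideal of `G_μ` generated by the initial term of `g`
is a nonzero prime ideal. -/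
def MuIrreducible (μ : Polynomial K → WithTop Λ) (g : Polynomial K) : Prop :=
  μ g ≠ ⊤ ∧ ¬ MuDvd μ g 1 ∧ ∀ a b : Polynomial K, MuDvd μ g (a * b) → MuDvd μ g a ∨ MuDvd μ g b

/-- A (MacLane–Vaquié) key polynomial for `μ`: monic, `μ`-minimal and `μ`-irreducible. -/
def IsKeyPol (μ : Polynomial K → WithTop Λ) (φ : Polynomial K) : Prop :=
  φ.Monic ∧ MuMinimal μ φ ∧ MuIrreducible μ φ

/-- A key polynomial for `μ` of minimal degree. -/
def MinKeyPol (μ : Polynomial K → WithTop Λ) (φ : Polynomial K) : Prop :=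
  IsKeyPol μ φ ∧ ∀ ψ : Polynomial K, IsKeyPol μ ψ → φ.degree ≤ ψ.degree

/-- The coefficients of the `g`-adic expansion `f = ∑ a_s g^s`, `deg a_s < deg g`. -/
noncomputable def adicCoeff (g : Polynomial K) : Polynomial K → ℕ → Polynomial K
  | f, 0 => f %ₘ g
  | f, (s + 1) => adicCoeff g (f /ₘ g) s

/-- The truncation `μ_g` of `μ` : `μ_g (∑ a_s g^s) = min_s μ (a_s g^s)`. -/
noncomputable def truncVal (μ : Polynomial K → WithTop Λ) (g f : Polynomial K) : WithTop Λ :=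
  (Finset.range (f.natDegree + 1)).inf fun s => μ (adicCoeff g f s * g ^ s)

/-- The augmented valuation `[μ; φ, γ]`, acting on `φ`-expansions by
`ν(∑ a_s φ^s) = min_s (μ(a_s) + s γ)`. -/
noncomputable def augVal (μ : Polynomial K → WithTop Λ) (φ : Polynomial K) (γ : WithTop Λ)
    (f : Polynomial K) : WithTop Λ :=
  (Finset.range (f.natDegree + 1)).inf fun s => μ (adicCoeff φ f s) + s • γ

end Preamble

/-- over a henselian field, `v_F(f) = v(f(θ))` is independent of the chosen root
`θ` of `F`, and defines a valuation on `K[x]` extending `v` with support `(F)`. -/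
theorem vF_well_defined {K : Type*} [Field K] {Λ : Type*} [AddCommGroup Λ] [LinearOrder Λ] [IsOrderedAddMonoid Λ]
    (v : K → WithTop Λ) (hv : IsVal v)
    (vbar : AlgebraicClosure K → WithTop Λ) (hvbar : IsVal vbar)
    (hextbar : ∀ a : K, vbar (algebraMap K (AlgebraicClosure K) a) = v a)
    (hhens : ∀ w : AlgebraicClosure K → WithTop Λ, IsVal w →
      (∀ a : K, w (algebraMap K (AlgebraicClosure K) a) = v a) → w = vbar)
    (F : Polynomial K) (hFm : F.Monic) (hFirr : Irreducible F)
    (θ : AlgebraicClosure K) (hθ : Polynomial.aeval θ F = 0) :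
    (∀ θ' : AlgebraicClosure K, Polynomial.aeval θ' F = 0 →
        ∀ f : Polynomial K, vbar (Polynomial.aeval θ f) = vbar (Polynomial.aeval θ' f)) ∧
    IsVal (fun f : Polynomial K => vbar (Polynomial.aeval θ f)) ∧
    ExtendsVal v (fun f : Polynomial K => vbar (Polynomial.aeval θ f)) ∧
    ∀ f : Polynomial K, vbar (Polynomial.aeval θ f) = ⊤ ↔ F ∣ f := by
  
  obtain ⟨hv0, hv1, hvmul, hvadd⟩ := hvbar
  have hmin : minpoly K θ = F := (minpoly.eq_of_irreducible_of_monic hFirr hθ hFm).symm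
  have htop : ∀ x : AlgebraicClosure K, vbar x = ⊤ ↔ x = 0 := by
    intro x
    constructor
    · intro hx
      by_contra hx0
      have : vbar (x * x⁻¹) = vbar x + vbar x⁻¹ := hvmul x x⁻¹
      rw [mul_inv_cancel₀ hx0, hv1, hx, top_add] at this
      exact (WithTop.zero_ne_top) this
    · rintro rfl; exact hv0
  refine ⟨?_, ⟨?_, ?_, ?_, ?_⟩, ?_, ?_⟩
  · intro θ' hθ' f
    have h2 : minpoly K θ' = F := (minpoly.eq_of_irreducible_of_monic hFirr hθ' hFm).symm
    obtain ⟨σ, hσ⟩ := (Normal.minpoly_eq_iff_mem_orbit (F := K)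
      (E := AlgebraicClosure K)).mp (h2.trans hmin.symm)
    have hw : (fun x => vbar (σ x)) = vbar := by
      refine hhens _ ⟨?_, ?_, ?_, ?_⟩ ?_
      · simp [hv0]
      · simp [hv1]
      · intro a b; simp only [map_mul]; exact hvmul _ _
      · intro a b; simp only [map_add]; exact hvadd _ _
      · intro a; simp only [AlgEquiv.commutes]; exact hextbar a
    have key : σ (Polynomial.aeval θ f) = Polynomial.aeval θ' f := by
      have hσ' : σ θ = θ' := hσ
      rw [← hσ']; exact (Polynomial.aeval_algHom_apply (σ : AlgebraicClosure K →ₐ[K] AlgebraicClosure K) θ f).symm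
    calc vbar (Polynomial.aeval θ f) = vbar (σ (Polynomial.aeval θ f)) := by
          rw [show vbar (σ (Polynomial.aeval θ f))
            = (fun x => vbar (σ x)) (Polynomial.aeval θ f) from rfl, hw]
      _ = vbar (Polynomial.aeval θ' f) := by rw [key]
  · simp [hv0]
  · simp [hv1]
  · intro a b; simp only [map_mul]; exact hvmul _ _
  · intro a b; simp only [map_add]; exact hvadd _ _
  · intro a; simp only [Polynomial.aeval_C]; exact hextbar a
  · intro f
    rw [htop]
    constructor
    · intro h
      exact hmin ▸ minpoly.dvd K θ h
    · rintro ⟨g, rfl⟩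
      rw [map_mul, hθ, zero_mul]
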